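/- Equivalence of the two auxiliary maximal operators: let p(·) ∈ P(ℝ^n) and W ∈ A_{p(·)}. Then for all f ∈ L^1_loc(ℝ^n; F^d) and a.e. x, M''_{W,p(·)} f(x) ≲_d M'_{W,p(·)} f(x) ≲_d [W]_{A_{p(·)}} M''_{W,p(·)} f(x), where M'_{W,p(·)} f(x) = sup_{Q∋x} avg_Q |W^{p(·)}_Q W^{−1}(y) f(y)| dy and M''_{W,p(·)} f(x) = sup_{Q∋x} avg_Q |(\overline{W}^{p'(·)}_Q)^{−1} W^{−1}(y) f(y)| dy. The key matrix estimate is |(\overline{W}^{p'(·)}_Q)^{−1}(W^{p(·)}_Q)^{−1}|_op ≲ d uniformly over all cubes Q. -/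

import Mathlib

open MeasureTheory ENNReal

noncomputable section

abbrev Euc (n : ℕ) := EuclideanSpace ℝ (Fin n)

open scoped ComplexOrder

/-- The half-open cube with lower-left corner `a` and side length `ℓ`,
with sides parallel to the coordinate axes. -/
def cube {n : ℕ} (a : Euc n) (ℓ : ℝ) : Set (Euc n) :=
  WithLp.ofLp ⁻¹' Set.univ.pi fun i => Set.Ico (a i) (a i + ℓ)

/-- The modular of a variable Lebesgue space with (extended-real valued) exponent `p`:
the integral of `f ^ p` over the set where `p` is finite plus the essential supremum
of `f` over the set where `p = ∞`. -/
def modularE {n : ℕ} (p : Euc n → ℝ≥0∞) (f : Euc n → ℝ≥0∞) : ℝ≥0∞ :=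
  (∫⁻ x in {x | p x ≠ ∞}, f x ^ (p x).toReal) +
    essSup f (volume.restrict {x | p x = ∞})

/-- The Luxemburg norm of the variable Lebesgue space `L^{p(·)}(ℝⁿ)`. -/
def luxNormE {n : ℕ} (p : Euc n → ℝ≥0∞) (f : Euc n → ℝ≥0∞) : ℝ≥0∞ :=
  sInf {l : ℝ≥0∞ | l ≠ 0 ∧ modularE p (fun x => f x / l) ≤ 1}

/-- The Euclidean norm of a vector in `ℂ^d`. -/
def evNorm {d : ℕ} (u : Fin d → ℂ) : ℝ := ‖(WithLp.equiv 2 (Fin d → ℂ)).symm u‖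

/-- The operator norm of a `d × d` complex matrix, induced by the Euclidean norm. -/
def opNorm {d : ℕ} (V : Matrix (Fin d) (Fin d) ℂ) : ℝ :=
  ⨆ u : {u : Fin d → ℂ // evNorm u = 1}, evNorm (V.mulVec u)

/-- `1/p_Q`, the reciprocal of the harmonic mean of the exponent `p` over the cube `Q`. -/
def harmAvg {n : ℕ} (p : Euc n → ℝ≥0∞) (a : Euc n) (ℓ : ℝ) : ℝ :=
  average (volume.restrict (cube a ℓ)) fun x => ((p x)⁻¹).toReal

/-- The Goldberg auxiliary maximal operator `M'_{W,p(·)}`, defined relative to a family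
`Wred` of reducing operators (indexed by the corner and side length of a cube):
`M' f(x) = sup_{Q ∋ x} avg_Q |Wred_Q W(y)⁻¹ f(y)| dy`. -/
def Mprime {n d : ℕ} (W : Euc n → Matrix (Fin d) (Fin d) ℂ)
    (Wred : Euc n → ℝ → Matrix (Fin d) (Fin d) ℂ) (f : Euc n → Fin d → ℂ)
    (x : Euc n) : ℝ≥0∞ :=
  ⨆ (a : Euc n) (ℓ : ℝ) (_ : 0 < ℓ) (_ : x ∈ cube a ℓ),
    (ENNReal.ofReal (ℓ ^ n))⁻¹ *
      ∫⁻ y in cube a ℓ,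
        ENNReal.ofReal (evNorm ((Wred a ℓ).mulVec (((W y)⁻¹).mulVec (f y))))

/-- `IsReducingFamily p W Wred` says that for each cube `Q` (corner `a`, side `ℓ`),
`Wred a ℓ` is a positive-definite constant matrix satisfying
`|Q|^{-1/p_Q} ‖ |W(·)u| 1_Q ‖_{L^{p(·)}} ≤ |Wred_Q u| ≤ √d · |Q|^{-1/p_Q} ‖ |W(·)u| 1_Q ‖_{L^{p(·)}}`
for every `u`, i.e. `Wred a ℓ` is a reducing operator for `W` on `Q`. -/
def IsReducingFamily {n d : ℕ} (p : Euc n → ℝ≥0∞) (W : Euc n → Matrix (Fin d) (Fin d) ℂ)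
    (Wred : Euc n → ℝ → Matrix (Fin d) (Fin d) ℂ) : Prop :=
  ∀ (a : Euc n) (ℓ : ℝ), 0 < ℓ → (Wred a ℓ).PosDef ∧ ∀ u : Fin d → ℂ,
    (ENNReal.ofReal ((ℓ ^ n) ^ (-(harmAvg p a ℓ))) *
        luxNormE p (fun y => (cube a ℓ).indicator
          (fun y => ENNReal.ofReal (evNorm ((W y).mulVec u))) y) ≤
      ENNReal.ofReal (evNorm ((Wred a ℓ).mulVec u))) ∧
    ENNReal.ofReal (evNorm ((Wred a ℓ).mulVec u)) ≤
      ENNReal.ofReal (Real.sqrt d) *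
        (ENNReal.ofReal ((ℓ ^ n) ^ (-(harmAvg p a ℓ))) *
          luxNormE p (fun y => (cube a ℓ).indicator
            (fun y => ENNReal.ofReal (evNorm ((W y).mulVec u))) y))

/-- The modified auxiliary maximal operator
`M''_{W,p(·)} f(x) = sup_{Q ∋ x} avg_Q |(Wbar_Q)⁻¹ W(y)⁻¹ f(y)| dy`, where `Wbar` is the
family of dual reducing operators. -/
def Mdoubleprime {n d : ℕ} (W : Euc n → Matrix (Fin d) (Fin d) ℂ)
    (Wbar : Euc n → ℝ → Matrix (Fin d) (Fin d) ℂ) (f : Euc n → Fin d → ℂ)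
    (x : Euc n) : ℝ≥0∞ :=
  ⨆ (a : Euc n) (ℓ : ℝ) (_ : 0 < ℓ) (_ : x ∈ cube a ℓ),
    (ENNReal.ofReal (ℓ ^ n))⁻¹ *
      ∫⁻ y in cube a ℓ,
        ENNReal.ofReal (evNorm (((Wbar a ℓ)⁻¹).mulVec (((W y)⁻¹).mulVec (f y))))

section Aux

variable {n d : ℕ}

lemma measurableSet_cube (a : Euc n) (ℓ : ℝ) : MeasurableSet (cube a ℓ) :=
  (MeasurableSet.univ_pi fun _ => measurableSet_Ico).preimage
    (PiLp.volume_preserving_ofLp (Fin n)).measurable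

lemma volume_cube (a : Euc n) {ℓ : ℝ} (hℓ : 0 < ℓ) :
    volume (cube a ℓ) = ENNReal.ofReal (ℓ ^ n) := by
  have h1 : cube a ℓ = (WithLp.ofLp) ⁻¹'
      (Set.univ.pi fun i => Set.Ico (a i) (a i + ℓ)) := rfl
  rw [h1, (PiLp.volume_preserving_ofLp (Fin n)).measure_preimage
    (MeasurableSet.univ_pi fun _ => measurableSet_Ico).nullMeasurableSet,
    volume_pi_pi]
  simp [Real.volume_Ico, ← ENNReal.ofReal_pow hℓ.le]

end Aux
section Aux2

variable {n : ℕ}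

lemma modularE_mono (p : Euc n → ℝ≥0∞) {f g : Euc n → ℝ≥0∞}
    (h : ∀ x, f x ≤ g x) : modularE p f ≤ modularE p g := by
  refine add_le_add (lintegral_mono fun x => ?_) (essSup_mono_ae (ae_of_all _ h))
  exact ENNReal.rpow_le_rpow (h x) ENNReal.toReal_nonneg

lemma lux_admissible (p : Euc n → ℝ≥0∞) {f : Euc n → ℝ≥0∞}
    {A : ℝ≥0∞} (hA : luxNormE p f < A) :
    modularE p (fun x => f x / A) ≤ 1 := by
  obtain ⟨l, ⟨hl0, hl⟩, hlA⟩ := sInf_lt_iff.1 hA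
  exact le_trans (modularE_mono p fun x => ENNReal.div_le_div le_rfl hlA.le) hl

end Aux2
section Hoelder

variable {n : ℕ}

lemma q_eq {p q : Euc n → ℝ≥0∞} (hp1 : ∀ x, 1 ≤ p x)
    (hpq : ∀ x, (p x)⁻¹ + (q x)⁻¹ = 1) : q = fun x => (1 - (p x)⁻¹)⁻¹ := by
  funext x
  have hne : (p x)⁻¹ ≠ ∞ := by
    simp only [ne_eq, ENNReal.inv_eq_top]
    intro h; simpa [h] using hp1 x
  have : (q x)⁻¹ = 1 - (p x)⁻¹ := by
    rw [← hpq x, ENNReal.add_sub_cancel_left hne]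
  rw [← inv_inv (q x), this]

lemma hoelder_norm {p q : Euc n → ℝ≥0∞} (hp1 : ∀ x, 1 ≤ p x)
    (hpq : ∀ x, (p x)⁻¹ + (q x)⁻¹ = 1) (hpm : Measurable p)
    {F G : Euc n → ℝ≥0∞} (hF : Measurable F) (hG : Measurable G)
    (hmA : modularE p F ≤ 1) (hmB : modularE q G ≤ 1) :
    ∫⁻ x, F x * G x ≤ 2 := by
  have hp0 : ∀ x, p x ≠ 0 := fun x h => by simpa [h] using hp1 x
  have hpinv_ne : ∀ x, (p x)⁻¹ ≠ ∞ := fun x => by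
    simp only [ne_eq, ENNReal.inv_eq_top]; exact hp0 x
  have hq1 : ∀ x, 1 ≤ q x := by
    intro x
    rw [← ENNReal.inv_le_one, ← hpq x]; exact le_add_self
  have hq0 : ∀ x, q x ≠ 0 := fun x h => by simpa [h] using hq1 x
  have hqinv_ne : ∀ x, (q x)⁻¹ ≠ ∞ := fun x => by
    simp only [ne_eq, ENNReal.inv_eq_top]; exact hq0 x
  have hqm : Measurable q := by
    rw [q_eq hp1 hpq]; exact (measurable_const.sub hpm.inv).inv
  -- sets
  set S2 : Set (Euc n) := {x | p x = ∞} with hS2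
  set S3 : Set (Euc n) := {x | q x = ∞} with hS3
  set S1 : Set (Euc n) := S2ᶜ ∩ S3ᶜ with hS1
  have mS2 : MeasurableSet S2 := hpm (measurableSet_singleton ∞)
  have mS3 : MeasurableSet S3 := hqm (measurableSet_singleton ∞)
  have mS1 : MeasurableSet S1 := mS2.compl.inter mS3.compl
  have hq_on_S2 : ∀ x ∈ S2, q x = 1 := by
    intro x hx
    have : (q x)⁻¹ = 1 := by
      have := hpq x
      rw [show p x = ∞ from hx] at this; simpa using this
    rwa [ENNReal.inv_eq_one] at this
  have hp_on_S3 : ∀ x ∈ S3, p x = 1 := by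
    intro x hx
    have : (p x)⁻¹ = 1 := by
      have := hpq x
      rw [show q x = ∞ from hx] at this; simpa using this
    rwa [ENNReal.inv_eq_one] at this
  have hS23 : Disjoint S2 S3 := by
    rw [Set.disjoint_left]
    intro x hx2 hx3
    have := hq_on_S2 x hx2
    rw [show q x = ∞ from hx3] at this; simp at this
  have hS123 : Disjoint S1 (S2 ∪ S3) := by
    rw [Set.disjoint_left]
    rintro x ⟨hx2, hx3⟩ (h | h)
    exacts [hx2 h, hx3 h]
  have hunion : S1 ∪ (S2 ∪ S3) = Set.univ := by
    ext x
    simp only [Set.mem_union, Set.mem_inter_iff, Set.mem_compl_iff, Set.mem_univ, iff_true, hS1]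
    tauto
  -- split the integral
  have hsplit : ∫⁻ x, F x * G x =
      (∫⁻ x in S1, F x * G x) + ((∫⁻ x in S2, F x * G x) + ∫⁻ x in S3, F x * G x) := by
    rw [← setLIntegral_univ, ← hunion, lintegral_union (mS2.union mS3) hS123,
      lintegral_union mS3 hS23]
  -- measurable powers
  have hFp : Measurable fun x => F x ^ (p x).toReal :=
    hF.pow (ENNReal.measurable_toReal.comp hpm)
  have hGq : Measurable fun x => G x ^ (q x).toReal :=
    hG.pow (ENNReal.measurable_toReal.comp hqm)
  -- Bound on S1
  have hb1 : ∫⁻ x in S1, F x * G x ≤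
      (∫⁻ x in S1, F x ^ (p x).toReal) + ∫⁻ x in S1, G x ^ (q x).toReal := by
    calc ∫⁻ x in S1, F x * G x
        ≤ ∫⁻ x in S1, (F x ^ (p x).toReal + G x ^ (q x).toReal) := by
          refine setLIntegral_mono (hFp.add hGq) fun x hx => ?_
          obtain ⟨hx2, hx3⟩ := hx
          have hpf : p x ≠ ∞ := hx2
          have hqf : q x ≠ ∞ := hx3
          have hplt : 1 < p x := by
            rcases lt_or_eq_of_le (hp1 x) with h | h
            · exact h
            · exfalso; apply hx3
              have := hpq x
              rw [← h] at this
              simp only [inv_one] at this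
              have h0 : (q x)⁻¹ = 0 := by
                have h1 : (1:ℝ≥0∞) + (q x)⁻¹ = 1 + 0 := by simpa using this
                exact (ENNReal.add_right_inj (by simp)).1 h1
              exact ENNReal.inv_eq_zero.1 h0
          have h1p : 1 < (p x).toReal := by
            have := (ENNReal.toReal_lt_toReal (by simp) hpf).2 hplt
            simpa using this
          have hconj : ((p x).toReal).HolderConjugate ((q x).toReal) := by
            rw [Real.holderConjugate_iff]
            constructor
            · exact h1p
            · rw [← ENNReal.toReal_inv, ← ENNReal.toReal_inv,
                ← ENNReal.toReal_add (hpinv_ne x) (hqinv_ne x), hpq x, ENNReal.toReal_one]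
          refine le_trans (ENNReal.young_inequality (F x) (G x) hconj) ?_
          gcongr
          · exact ENNReal.div_le_of_le_mul
              (le_mul_of_one_le_right zero_le (ENNReal.one_le_ofReal.2 h1p.le))
          · exact ENNReal.div_le_of_le_mul
              (le_mul_of_one_le_right zero_le (ENNReal.one_le_ofReal.2 hconj.symm.lt.le))
      _ = _ := lintegral_add_left hFp _
  -- Bound on S3 (there p = 1)
  have hb3 : ∫⁻ x in S3, F x * G x ≤ ∫⁻ x in S3, F x ^ (p x).toReal := by
    have hGle : ∀ᵐ x ∂(volume.restrict S3), G x ≤ 1 :=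
      (ae_le_essSup G).mono fun x hx => le_trans hx (le_trans le_add_self hmB)
    calc ∫⁻ x in S3, F x * G x ≤ ∫⁻ x in S3, F x := by
          refine lintegral_mono_ae (hGle.mono fun x hx => ?_)
          calc F x * G x ≤ F x * 1 := mul_le_mul_right hx _
            _ = F x := mul_one _
      _ = ∫⁻ x in S3, F x ^ (p x).toReal := by
          refine setLIntegral_congr_fun mS3 (fun x hx => ?_)
          rw [hp_on_S3 x hx]; simp
  -- Bound on S2 (there q = 1)
  have hb2 : ∫⁻ x in S2, F x * G x ≤ ∫⁻ x in S2, G x ^ (q x).toReal := by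
    have hFle : ∀ᵐ x ∂(volume.restrict S2), F x ≤ 1 :=
      (ae_le_essSup F).mono fun x hx => le_trans hx (le_trans le_add_self hmA)
    calc ∫⁻ x in S2, F x * G x ≤ ∫⁻ x in S2, G x := by
          refine lintegral_mono_ae (hFle.mono fun x hx => ?_)
          calc F x * G x ≤ 1 * G x := mul_le_mul_left hx _
            _ = G x := one_mul _
      _ = _ := by
          refine setLIntegral_congr_fun mS2 (fun x hx => ?_)
          rw [hq_on_S2 x hx]; simp
  -- combine
  have hd13 : Disjoint S1 S3 := Set.disjoint_left.2 fun x hx h3 => hx.2 h3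
  have hd12 : Disjoint S1 S2 := Set.disjoint_left.2 fun x hx h2 => hx.1 h2
  have hcF : (∫⁻ x in S1, F x ^ (p x).toReal) + (∫⁻ x in S3, F x ^ (p x).toReal) ≤ 1 := by
    rw [← lintegral_union mS3 hd13]
    refine le_trans (le_trans (lintegral_mono_set ?_) le_self_add) hmA
    rintro x (⟨hx2, _⟩ | hx3)
    · exact hx2
    · show p x ≠ ∞
      rw [hp_on_S3 x hx3]; simp
  have hcG : (∫⁻ x in S1, G x ^ (q x).toReal) + (∫⁻ x in S2, G x ^ (q x).toReal) ≤ 1 := by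
    rw [← lintegral_union mS2 hd12]
    refine le_trans (le_trans (lintegral_mono_set ?_) le_self_add) hmB
    rintro x (⟨_, hx3⟩ | hx2)
    · exact hx3
    · show q x ≠ ∞
      rw [hq_on_S2 x hx2]; simp
  rw [hsplit]
  calc (∫⁻ x in S1, F x * G x) + ((∫⁻ x in S2, F x * G x) + ∫⁻ x in S3, F x * G x)
      ≤ ((∫⁻ x in S1, F x ^ (p x).toReal) + ∫⁻ x in S1, G x ^ (q x).toReal) +
        ((∫⁻ x in S2, G x ^ (q x).toReal) + ∫⁻ x in S3, F x ^ (p x).toReal) :=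
        add_le_add hb1 (add_le_add hb2 hb3)
    _ = ((∫⁻ x in S1, F x ^ (p x).toReal) + ∫⁻ x in S3, F x ^ (p x).toReal) +
        ((∫⁻ x in S1, G x ^ (q x).toReal) + ∫⁻ x in S2, G x ^ (q x).toReal) := by ring
    _ ≤ 1 + 1 := add_le_add hcF hcG
    _ = 2 := one_add_one_eq_two

end Hoelder
section Aux4

variable {n : ℕ}

lemma hoelder_scaled {p q : Euc n → ℝ≥0∞} (hp1 : ∀ x, 1 ≤ p x)
    (hpq : ∀ x, (p x)⁻¹ + (q x)⁻¹ = 1) (hpm : Measurable p)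
    {f g : Euc n → ℝ≥0∞} (hf : Measurable f) (hg : Measurable g)
    {A B : ℝ≥0∞} (hA0 : A ≠ 0) (hB0 : B ≠ 0)
    (hmA : modularE p (fun x => f x / A) ≤ 1) (hmB : modularE q (fun x => g x / B) ≤ 1) :
    ∫⁻ x, f x * g x ≤ 2 * A * B := by
  rcases eq_or_ne A ∞ with hA | hA
  · rw [hA, ENNReal.mul_top (by simp), ENNReal.top_mul hB0]; exact le_top
  rcases eq_or_ne B ∞ with hB | hB
  · rw [hB, ENNReal.mul_top (by simp [hA0])]; exact le_top
  have key := hoelder_norm hp1 hpq hpm (hf.div_const A) (hg.div_const B) hmA hmB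
  have heq : ∀ x, f x * g x = (A * B) * ((f x / A) * (g x / B)) := by
    intro x
    conv_lhs => rw [← ENNReal.div_mul_cancel hA0 hA (b := f x),
      ← ENNReal.div_mul_cancel hB0 hB (b := g x)]
    ring
  calc ∫⁻ x, f x * g x = ∫⁻ x, (A * B) * ((f x / A) * (g x / B)) := by
        exact lintegral_congr heq
    _ = (A * B) * ∫⁻ x, (f x / A) * (g x / B) :=
        lintegral_const_mul' _ _ (ENNReal.mul_ne_top hA hB)
    _ ≤ (A * B) * 2 := mul_le_mul_right key _
    _ = 2 * A * B := by ring

lemma eps_limit {X N M : ℝ≥0∞} (hN : N ≠ ∞) (hM : M ≠ ∞)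
    (h : ∀ ε : ℝ≥0∞, 0 < ε → ε ≠ ∞ → X ≤ 2 * (N + ε) * (M + ε)) : X ≤ 2 * N * M := by
  refine ENNReal.le_of_forall_pos_le_add fun δ hδ _ => ?_
  set c : ℝ≥0∞ := 2 * N + 2 * M + 2 with hc
  have hc0 : c ≠ 0 := by simp [hc]
  have hcT : c ≠ ∞ := by
    simp only [hc, ne_eq, ENNReal.add_eq_top, not_or]
    exact ⟨⟨by simp [ENNReal.mul_eq_top, hN], by simp [ENNReal.mul_eq_top, hM]⟩, by simp⟩
  set ε : ℝ≥0∞ := min 1 ((δ : ℝ≥0∞) / c) with hε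
  have hε0 : 0 < ε := lt_min one_pos (ENNReal.div_pos (by exact_mod_cast hδ.ne') hcT)
  have hεT : ε ≠ ∞ := ne_top_of_le_ne_top (by simp) (min_le_left _ _)
  have hε1 : ε ≤ 1 := min_le_left _ _
  calc X ≤ 2 * (N + ε) * (M + ε) := h ε hε0 hεT
    _ = 2 * N * M + ((2 * N + 2 * M) * ε + 2 * (ε * ε)) := by ring
    _ ≤ 2 * N * M + ((2 * N + 2 * M) * ε + 2 * (1 * ε)) := by
        gcongr
    _ = 2 * N * M + c * ε := by ring
    _ ≤ 2 * N * M + c * ((δ : ℝ≥0∞) / c) := by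
        gcongr
        exact min_le_right _ _
    _ = 2 * N * M + δ := by rw [ENNReal.mul_div_cancel hc0 hcT]

lemma lux_ne_top {a b r : ℝ≥0∞} (ha0 : a ≠ 0) (hr : r ≠ ∞) (h : a * b ≤ r) : b ≠ ∞ := by
  intro hb
  rw [hb, ENNReal.mul_top ha0] at h
  exact (hr (top_le_iff.1 h)).elim

end Aux4
section LinAlg

variable {d : ℕ}

def toE {d : ℕ} : (Fin d → ℂ) → EuclideanSpace ℂ (Fin d) :=
  (WithLp.equiv 2 (Fin d → ℂ)).symm

lemma toE_def : (toE : (Fin d → ℂ) → EuclideanSpace ℂ (Fin d))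
    = (WithLp.equiv 2 (Fin d → ℂ)).symm := rfl

lemma evNorm_toE (u : Fin d → ℂ) : evNorm u = ‖toE u‖ := rfl

lemma inner_toE (x y : Fin d → ℂ) :
    (inner ℂ (toE x) (toE y) : ℂ) = dotProduct (star x) y := by
  simp only [PiLp.inner_apply, RCLike.inner_apply, dotProduct, Pi.star_apply]
  exact Finset.sum_congr rfl fun i _ => mul_comm _ _

lemma inner_herm {H : Matrix (Fin d) (Fin d) ℂ} (hH : H.IsHermitian)
    (x y : Fin d → ℂ) :
    (inner ℂ (toE (H.mulVec x)) (toE y) : ℂ) = inner ℂ (toE x) (toE (H.mulVec y)) := by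
  rw [inner_toE, inner_toE, Matrix.star_mulVec, Matrix.dotProduct_mulVec,
    hH.eq]

lemma mulVec_inv_cancel {A : Matrix (Fin d) (Fin d) ℂ} (hA : IsUnit A.det)
    (v : Fin d → ℂ) : A.mulVec (A⁻¹.mulVec v) = v := by
  rw [Matrix.mulVec_mulVec, Matrix.mul_nonsing_inv _ hA, Matrix.one_mulVec]

lemma inv_mulVec_cancel {A : Matrix (Fin d) (Fin d) ℂ} (hA : IsUnit A.det)
    (v : Fin d → ℂ) : A⁻¹.mulVec (A.mulVec v) = v := by
  rw [Matrix.mulVec_mulVec, Matrix.nonsing_inv_mul _ hA, Matrix.one_mulVec]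

lemma inner_W_cancel {W : Matrix (Fin d) (Fin d) ℂ} (hW : W.PosDef) (u v : Fin d → ℂ) :
    (inner ℂ (toE u) (toE v) : ℂ) = inner ℂ (toE (W.mulVec u)) (toE (W⁻¹.mulVec v)) := by
  rw [inner_herm hW.isHermitian, mulVec_inv_cancel ((Matrix.isUnit_iff_isUnit_det _).1 hW.isUnit)]

lemma evNorm_zero : evNorm (0 : Fin d → ℂ) = 0 := by
  rw [evNorm_toE, toE_def, WithLp.equiv_symm_apply, WithLp.toLp_zero, norm_zero]

lemma evNorm_nonneg (u : Fin d → ℂ) -- norm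
    : 0 ≤ evNorm u := norm_nonneg _

lemma opNorm_nonneg (V : Matrix (Fin d) (Fin d) ℂ) : 0 ≤ opNorm V :=
  Real.iSup_nonneg fun u => evNorm_nonneg _

lemma evNorm_mulVec_le_norm (V : Matrix (Fin d) (Fin d) ℂ) (u : Fin d → ℂ) :
    evNorm (V.mulVec u) ≤
      ‖LinearMap.toContinuousLinearMap (Matrix.toEuclideanLin V)‖ * evNorm u := by
  have h := (LinearMap.toContinuousLinearMap (Matrix.toEuclideanLin V)).le_opNorm
    ((WithLp.equiv 2 (Fin d → ℂ)).symm u)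
  rw [LinearMap.coe_toContinuousLinearMap', WithLp.equiv_symm_apply,
    Matrix.toEuclideanLin_apply_piLp_toLp] at h
  exact h

lemma bddAbove_evrange (V : Matrix (Fin d) (Fin d) ℂ) :
    BddAbove (Set.range fun u : {u : Fin d → ℂ // evNorm u = 1} => evNorm (V.mulVec u)) := by
  refine ⟨‖LinearMap.toContinuousLinearMap (Matrix.toEuclideanLin V)‖, ?_⟩
  rintro r ⟨u, rfl⟩
  have h := evNorm_mulVec_le_norm V u
  rw [u.2, mul_one] at h
  exact h

lemma evNorm_smul (c : ℝ) (u : Fin d → ℂ) : evNorm (c • u) = |c| * evNorm u := by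
  rw [evNorm_toE, evNorm_toE, toE_def, WithLp.equiv_symm_apply, WithLp.toLp_smul, norm_smul, Real.norm_eq_abs]

lemma evNorm_eq_zero {u : Fin d → ℂ} : evNorm u = 0 ↔ u = 0 := by
  rw [evNorm_toE, norm_eq_zero, toE_def]
  constructor
  · intro h
    have h2 := congrArg (WithLp.equiv 2 (Fin d → ℂ)) h
    simpa using h2
  · rintro rfl; rfl

lemma mulVec_le_opNorm (V : Matrix (Fin d) (Fin d) ℂ) (w : Fin d → ℂ) :
    evNorm (V.mulVec w) ≤ opNorm V * evNorm w := by
  rcases eq_or_ne w 0 with rfl | hw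
  · rw [Matrix.mulVec_zero, evNorm_zero, mul_zero]
  · set c := evNorm w with hc
    have hc0 : 0 < c := lt_of_le_of_ne (evNorm_nonneg w) (fun h => hw (evNorm_eq_zero.1 h.symm))
    set u : Fin d → ℂ := c⁻¹ • w with hu
    have hu1 : evNorm u = 1 := by
      rw [hu, evNorm_smul, abs_of_pos (inv_pos.2 hc0), inv_mul_cancel₀ hc0.ne']
    have hwu : w = c • u := by rw [hu, smul_inv_smul₀ hc0.ne']
    have hle : evNorm (V.mulVec u) ≤ opNorm V :=
      le_ciSup (bddAbove_evrange V) (⟨u, hu1⟩ : {u : Fin d → ℂ // evNorm u = 1})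
    calc evNorm (V.mulVec w) = evNorm (V.mulVec (c • u)) := by rw [← hwu]
      _ = c * evNorm (V.mulVec u) := by
          rw [Matrix.mulVec_smul, evNorm_smul, abs_of_pos hc0]
      _ ≤ c * opNorm V := mul_le_mul_of_nonneg_left hle hc0.le
      _ = opNorm V * c := mul_comm _ _

lemma opNorm_le_of_forall {V : Matrix (Fin d) (Fin d) ℂ} {K : ℝ} (hK : 0 ≤ K)
    (h : ∀ w, evNorm (V.mulVec w) ≤ K * evNorm w) : opNorm V ≤ K := by
  refine Real.iSup_le (fun u => ?_) hK
  have h2 := h u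
  rwa [u.2, mul_one] at h2

end LinAlg
section HarmAvg

lemma harmAvg_add {n : ℕ} {p q : Euc n → ℝ≥0∞} (hp1 : ∀ x, 1 ≤ p x)
    (hpq : ∀ x, (p x)⁻¹ + (q x)⁻¹ = 1) (hpm : Measurable p)
    (a : Euc n) {ℓ : ℝ} (hℓ : 0 < ℓ) :
    harmAvg p a ℓ + harmAvg q a ℓ = 1 := by
  have hp0 : ∀ x, p x ≠ 0 := fun x h => by simpa [h] using hp1 x
  have hq1 : ∀ x, 1 ≤ q x := by
    intro x
    rw [← ENNReal.inv_le_one, ← hpq x]; exact le_add_self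
  have hq0 : ∀ x, q x ≠ 0 := fun x h => by simpa [h] using hq1 x
  have hqm : Measurable q := by
    rw [q_eq hp1 hpq]; exact (measurable_const.sub hpm.inv).inv
  set μ := volume.restrict (cube a ℓ) with hμ
  have hμuniv : μ Set.univ = ENNReal.ofReal (ℓ ^ n) := by
    rw [hμ, Measure.restrict_apply_univ, volume_cube a hℓ]
  have hln : 0 < ℓ ^ n := pow_pos hℓ n
  haveI : IsFiniteMeasure μ :=
    ⟨by rw [hμuniv]; exact ENNReal.ofReal_lt_top⟩
  haveI : NeZero μ := by
    constructor
    intro h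
    rw [h] at hμuniv
    rw [Measure.coe_zero, Pi.zero_apply] at hμuniv
    exact absurd hμuniv.symm (by simp [hln])
  set f : Euc n → ℝ := fun x => ((p x)⁻¹).toReal with hf
  set g : Euc n → ℝ := fun x => ((q x)⁻¹).toReal with hg
  have hfm : Measurable f := ENNReal.measurable_toReal.comp hpm.inv
  have hgm : Measurable g := ENNReal.measurable_toReal.comp hqm.inv
  have hfb : ∀ x, ‖f x‖ ≤ 1 := by
    intro x
    rw [hf, Real.norm_eq_abs, abs_of_nonneg ENNReal.toReal_nonneg]
    exact le_trans (ENNReal.toReal_mono (by simp) (ENNReal.inv_le_one.2 (hp1 x))) (by simp)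
  have hgb : ∀ x, ‖g x‖ ≤ 1 := by
    intro x
    rw [hg, Real.norm_eq_abs, abs_of_nonneg ENNReal.toReal_nonneg]
    exact le_trans (ENNReal.toReal_mono (by simp) (ENNReal.inv_le_one.2 (hq1 x))) (by simp)
  have hfi : Integrable f μ :=
    Integrable.mono' (integrable_const 1) hfm.aestronglyMeasurable (ae_of_all _ hfb)
  have hgi : Integrable g μ :=
    Integrable.mono' (integrable_const 1) hgm.aestronglyMeasurable (ae_of_all _ hgb)
  have hsum : ∀ x, f x + g x = 1 := by
    intro x
    rw [hf, hg, ← ENNReal.toReal_add (by simp [hp0 x]) (by simp [hq0 x]), hpq x,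
      ENNReal.toReal_one]
  have : harmAvg p a ℓ + harmAvg q a ℓ = ⨍ x, (f x + g x) ∂μ := by
    unfold harmAvg
    rw [average_eq, average_eq, average_eq, integral_add hfi hgi, smul_add]
  rw [this]
  have h1 : (fun x => f x + g x) = fun _ : Euc n => (1 : ℝ) := funext hsum
  rw [h1, average_const]

end HarmAvg
section KeyInner

lemma measurable_evNorm {n d : ℕ} {vec : Euc n → Fin d → ℂ}
    (h : ∀ i, Measurable fun y => vec y i) :
    Measurable fun y => evNorm (vec y) := by
  have heq : ∀ y, evNorm (vec y) = Real.sqrt (∑ i, ‖vec y i‖ ^ 2) := by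
    intro y
    rw [evNorm_toE, EuclideanSpace.norm_eq]
    rfl
  simp_rw [heq]
  exact Real.continuous_sqrt.measurable.comp
    (Finset.measurable_sum _ fun i _ => ((h i).norm.pow_const 2))

lemma measurable_mulVec {n d : ℕ} {W : Euc n → Matrix (Fin d) (Fin d) ℂ}
    (hWm : ∀ i j, Measurable fun x => W x i j) (u : Fin d → ℂ) (i : Fin d) :
    Measurable fun y => (W y).mulVec u i := by
  unfold Matrix.mulVec dotProduct
  exact Finset.measurable_sum _ fun j _ => (hWm i j).mul measurable_const

lemma measurable_det {n d : ℕ} {W : Euc n → Matrix (Fin d) (Fin d) ℂ}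
    (hWm : ∀ i j, Measurable fun x => W x i j) :
    Measurable fun x => (W x).det := by
  simp_rw [Matrix.det_apply']
  exact Finset.measurable_sum _ fun σ _ =>
    measurable_const.mul (Finset.measurable_prod _ fun i _ => hWm (σ i) i)

lemma measurable_inv_entry {n d : ℕ} {W : Euc n → Matrix (Fin d) (Fin d) ℂ}
    (hWm : ∀ i j, Measurable fun x => W x i j) (i j : Fin d) :
    Measurable fun x => (W x)⁻¹ i j := by
  have : ∀ x, (W x)⁻¹ i j = Ring.inverse (W x).det * (W x).adjugate i j := by
    intro x
    rw [Matrix.inv_def]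
    rfl
  simp_rw [this, Ring.inverse_eq_inv']
  refine Measurable.mul (Measurable.inv ?_) ?_
  · exact measurable_det hWm
  · have : ∀ x, (W x).adjugate i j = ((W x).updateRow j (Pi.single i 1)).det := by
      intro x; rw [Matrix.adjugate_apply]
    simp_rw [this]
    refine measurable_det fun a b => ?_
    rcases eq_or_ne a j with rfl | haj
    · simp only [Matrix.updateRow_self]
      exact measurable_const
    · simp only [Matrix.updateRow_ne haj]
      exact hWm a b

end KeyInner
section KeyEstimate

lemma key_inner {n d : ℕ} {p q : Euc n → ℝ≥0∞} (hp1 : ∀ x, 1 ≤ p x)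
    (hpq : ∀ x, (p x)⁻¹ + (q x)⁻¹ = 1) (hpm : Measurable p)
    {W : Euc n → Matrix (Fin d) (Fin d) ℂ} (hWpd : ∀ x, (W x).PosDef)
    (hWm : ∀ i j, Measurable fun x => W x i j)
    {a : Euc n} {ℓ : ℝ} (hℓ : 0 < ℓ)
    {Wr Wb : Matrix (Fin d) (Fin d) ℂ}
    (hr : ∀ u : Fin d → ℂ, ENNReal.ofReal ((ℓ ^ n) ^ (-(harmAvg p a ℓ))) *
        luxNormE p (fun y => (cube a ℓ).indicator
          (fun y => ENNReal.ofReal (evNorm ((W y).mulVec u))) y) ≤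
        ENNReal.ofReal (evNorm (Wr.mulVec u)))
    (hb : ∀ u : Fin d → ℂ, ENNReal.ofReal ((ℓ ^ n) ^ (-(harmAvg q a ℓ))) *
        luxNormE q (fun y => (cube a ℓ).indicator
          (fun y => ENNReal.ofReal (evNorm (((W y)⁻¹).mulVec u))) y) ≤
        ENNReal.ofReal (evNorm (Wb.mulVec u)))
    (u v : Fin d → ℂ) :
    ‖(inner ℂ (toE u) (toE v) : ℂ)‖ ≤ 2 * (evNorm (Wr.mulVec u) * evNorm (Wb.mulVec v)) := by
  have hln : (0:ℝ) < ℓ ^ n := pow_pos hℓ n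
  set cp : ℝ := (ℓ ^ n) ^ (-(harmAvg p a ℓ)) with hcp
  set cq : ℝ := (ℓ ^ n) ^ (-(harmAvg q a ℓ)) with hcq
  have hcp0 : 0 < cp := Real.rpow_pos_of_pos hln _
  have hcq0 : 0 < cq := Real.rpow_pos_of_pos hln _
  set f : Euc n → ℝ≥0∞ := fun y => (cube a ℓ).indicator
    (fun y => ENNReal.ofReal (evNorm ((W y).mulVec u))) y with hfdef
  set g : Euc n → ℝ≥0∞ := fun y => (cube a ℓ).indicator
    (fun y => ENNReal.ofReal (evNorm (((W y)⁻¹).mulVec v))) y with hgdef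
  have hfm : Measurable f :=
    (ENNReal.measurable_ofReal.comp (measurable_evNorm (measurable_mulVec hWm u))).indicator
      (measurableSet_cube a ℓ)
  have hgm : Measurable g :=
    (ENNReal.measurable_ofReal.comp (measurable_evNorm
      (measurable_mulVec (measurable_inv_entry hWm) v))).indicator (measurableSet_cube a ℓ)
  set Np := luxNormE p f with hNp
  set Nq := luxNormE q g with hNq
  have hNptop : Np ≠ ∞ := lux_ne_top (by simp [hcp0]) ENNReal.ofReal_ne_top (hr u)
  have hNqtop : Nq ≠ ∞ := lux_ne_top (by simp [hcq0]) ENNReal.ofReal_ne_top (hb v)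
  -- the ℝ≥0∞ quantity to bound
  set X := ENNReal.ofReal ‖(inner ℂ (toE u) (toE v) : ℂ)‖ with hX
  -- Step 1: X * |Q| ≤ ∫ f g
  have step1 : X * ENNReal.ofReal (ℓ ^ n) ≤ ∫⁻ y, f y * g y := by
    have hpt : ∀ y ∈ cube a ℓ, X ≤
        ENNReal.ofReal (evNorm ((W y).mulVec u)) *
          ENNReal.ofReal (evNorm (((W y)⁻¹).mulVec v)) := by
      intro y _
      rw [hX, ← ENNReal.ofReal_mul (evNorm_nonneg _)]
      apply ENNReal.ofReal_le_ofReal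
      rw [inner_W_cancel (hWpd y) u v]
      exact norm_inner_le_norm _ _
    calc X * ENNReal.ofReal (ℓ ^ n) = ∫⁻ _ in cube a ℓ, X := by
          rw [setLIntegral_const, volume_cube a hℓ]
      _ ≤ ∫⁻ y in cube a ℓ, ENNReal.ofReal (evNorm ((W y).mulVec u)) *
            ENNReal.ofReal (evNorm (((W y)⁻¹).mulVec v)) :=
          setLIntegral_mono' (measurableSet_cube a ℓ) hpt
      _ = ∫⁻ y, (cube a ℓ).indicator (fun y => ENNReal.ofReal (evNorm ((W y).mulVec u)) *
            ENNReal.ofReal (evNorm (((W y)⁻¹).mulVec v))) y :=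
          by rw [lintegral_indicator (measurableSet_cube a ℓ)]
      _ = ∫⁻ y, f y * g y := by
          refine lintegral_congr fun y => ?_
          rw [hfdef, hgdef]
          by_cases hy : y ∈ cube a ℓ <;> simp [hy]
  -- Step 2: Hölder with epsilons
  have step2 : ∫⁻ y, f y * g y ≤ 2 * Np * Nq := by
    refine eps_limit hNptop hNqtop fun ε hε0 hεT => ?_
    refine hoelder_scaled hp1 hpq hpm hfm hgm ?_ ?_ ?_ ?_
    · exact (lt_of_lt_of_le hε0 le_add_self).ne'
    · exact (lt_of_lt_of_le hε0 le_add_self).ne'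
    · exact lux_admissible p (ENNReal.lt_add_right hNptop hε0.ne')
    · exact lux_admissible q (ENNReal.lt_add_right hNqtop hε0.ne')
  -- Step 3: reducing bounds
  have hrp : Np ≤ (ENNReal.ofReal cp)⁻¹ * ENNReal.ofReal (evNorm (Wr.mulVec u)) := by
    have h1 : Np = (ENNReal.ofReal cp)⁻¹ * (ENNReal.ofReal cp * Np) := by
      rw [← mul_assoc, ENNReal.inv_mul_cancel (by simp [hcp0]) ENNReal.ofReal_ne_top, one_mul]
    rw [h1]
    exact mul_le_mul_right (hr u) _
  have hrq : Nq ≤ (ENNReal.ofReal cq)⁻¹ * ENNReal.ofReal (evNorm (Wb.mulVec v)) := by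
    have h1 : Nq = (ENNReal.ofReal cq)⁻¹ * (ENNReal.ofReal cq * Nq) := by
      rw [← mul_assoc, ENNReal.inv_mul_cancel (by simp [hcq0]) ENNReal.ofReal_ne_top, one_mul]
    rw [h1]
    exact mul_le_mul_right (hb v) _
  -- Step 4: product of the normalizing constants
  have hcpq : (ENNReal.ofReal cp)⁻¹ * (ENNReal.ofReal cq)⁻¹ = ENNReal.ofReal (ℓ ^ n) := by
    rw [← ENNReal.mul_inv (Or.inl (by simp [hcp0])) (Or.inl ENNReal.ofReal_ne_top),
      ← ENNReal.ofReal_mul hcp0.le]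
    have : cp * cq = (ℓ ^ n)⁻¹ := by
      rw [hcp, hcq, ← Real.rpow_add hln, ← neg_add, harmAvg_add hp1 hpq hpm a hℓ,
        Real.rpow_neg_one]
    rw [this, ← ENNReal.ofReal_inv_of_pos (inv_pos.2 hln), inv_inv]
  -- Combine
  have main : X * ENNReal.ofReal (ℓ ^ n) ≤
      (2 * (ENNReal.ofReal (evNorm (Wr.mulVec u)) * ENNReal.ofReal (evNorm (Wb.mulVec v)))) *
        ENNReal.ofReal (ℓ ^ n) := by
    calc X * ENNReal.ofReal (ℓ ^ n) ≤ 2 * Np * Nq := le_trans step1 step2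
      _ ≤ 2 * ((ENNReal.ofReal cp)⁻¹ * ENNReal.ofReal (evNorm (Wr.mulVec u))) *
          ((ENNReal.ofReal cq)⁻¹ * ENNReal.ofReal (evNorm (Wb.mulVec v))) := by
          gcongr
      _ = (2 * (ENNReal.ofReal (evNorm (Wr.mulVec u)) * ENNReal.ofReal (evNorm (Wb.mulVec v)))) *
          ((ENNReal.ofReal cp)⁻¹ * (ENNReal.ofReal cq)⁻¹) := by ring
      _ = _ := by rw [hcpq]
  have hX2 : X ≤ 2 * (ENNReal.ofReal (evNorm (Wr.mulVec u)) * ENNReal.ofReal (evNorm (Wb.mulVec v))) :=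
    (ENNReal.mul_le_mul_iff_left (by simp [hln]) ENNReal.ofReal_ne_top).1 main
  -- back to ℝ
  have hX3 : X ≤ ENNReal.ofReal (2 * (evNorm (Wr.mulVec u) * evNorm (Wb.mulVec v))) := by
    rw [ENNReal.ofReal_mul (by norm_num), ENNReal.ofReal_mul (evNorm_nonneg _)]
    simpa [ENNReal.ofReal_ofNat] using hX2
  rw [hX] at hX3
  have h1 := evNorm_nonneg (Wr.mulVec u)
  have h2 := evNorm_nonneg (Wb.mulVec v)
  exact (ENNReal.ofReal_le_ofReal_iff (by positivity)).1 hX3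

end KeyEstimate
section KeyMatrix

lemma key_matrix {n d : ℕ} {p q : Euc n → ℝ≥0∞} (hp1 : ∀ x, 1 ≤ p x)
    (hpq : ∀ x, (p x)⁻¹ + (q x)⁻¹ = 1) (hpm : Measurable p)
    {W : Euc n → Matrix (Fin d) (Fin d) ℂ} (hWpd : ∀ x, (W x).PosDef)
    (hWm : ∀ i j, Measurable fun x => W x i j)
    {a : Euc n} {ℓ : ℝ} (hℓ : 0 < ℓ)
    {Wr Wb : Matrix (Fin d) (Fin d) ℂ}
    (hr : ∀ u : Fin d → ℂ, ENNReal.ofReal ((ℓ ^ n) ^ (-(harmAvg p a ℓ))) *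
        luxNormE p (fun y => (cube a ℓ).indicator
          (fun y => ENNReal.ofReal (evNorm ((W y).mulVec u))) y) ≤
        ENNReal.ofReal (evNorm (Wr.mulVec u)))
    (hb : ∀ u : Fin d → ℂ, ENNReal.ofReal ((ℓ ^ n) ^ (-(harmAvg q a ℓ))) *
        luxNormE q (fun y => (cube a ℓ).indicator
          (fun y => ENNReal.ofReal (evNorm (((W y)⁻¹).mulVec u))) y) ≤
        ENNReal.ofReal (evNorm (Wb.mulVec u)))
    (hWrpd : Wr.PosDef) (hWbpd : Wb.PosDef) :
    ∀ w : Fin d → ℂ, evNorm ((Wb⁻¹ * Wr⁻¹).mulVec w) ≤ 2 * evNorm w := by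
  intro w
  have hdr : IsUnit Wr.det := (Matrix.isUnit_iff_isUnit_det _).1 hWrpd.isUnit
  have hdb : IsUnit Wb.det := (Matrix.isUnit_iff_isUnit_det _).1 hWbpd.isUnit
  set Mw : Fin d → ℂ := (Wb⁻¹ * Wr⁻¹).mulVec w with hMw
  have hMw2 : Wb⁻¹.mulVec (Wr⁻¹.mulVec w) = Mw := Matrix.mulVec_mulVec _ _ _
  have h := key_inner hp1 hpq hpm hWpd hWm hℓ hr hb (Wr⁻¹.mulVec w) (Wb⁻¹.mulVec Mw)
  rw [mulVec_inv_cancel hdr, mulVec_inv_cancel hdb] at h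
  have hshift : (inner ℂ (toE (Wb⁻¹.mulVec (Wr⁻¹.mulVec w))) (toE Mw) : ℂ)
      = inner ℂ (toE (Wr⁻¹.mulVec w)) (toE (Wb⁻¹.mulVec Mw)) :=
    inner_herm hWbpd.inv.isHermitian _ _
  rw [← hshift, hMw2] at h
  have hself : ‖(inner ℂ (toE Mw) (toE Mw) : ℂ)‖ = evNorm Mw ^ 2 := by
    rw [inner_self_eq_norm_sq_to_K, norm_pow, RCLike.norm_ofReal, abs_norm]
    rfl
  rw [hself] at h
  rcases eq_or_lt_of_le (evNorm_nonneg Mw) with h0 | hpos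
  · rw [← h0]
    have := evNorm_nonneg w
    positivity
  · nlinarith [h, hpos]

end KeyMatrix
/-- Equivalence of the two auxiliary maximal operators: there is a
constant `C`, depending only on `d`, such that for every `p(·) ∈ P(ℝⁿ)` with conjugate
`q(·)` and every matrix weight `W ∈ A_{p(·)}` (with reducing operators `Wred`, dual
reducing operators `Wbar`, and `[W]^R_{A_{p(·)}} ≤ RW`), every
`f ∈ L¹_loc(ℝⁿ; ℂ^d)` and every `x`:
`M''_{W,p(·)} f(x) ≤ C · M'_{W,p(·)} f(x)` and
`M'_{W,p(·)} f(x) ≤ C · RW · M''_{W,p(·)} f(x)`; moreover the key matrix estimate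
`|(Wbar_Q)⁻¹ (Wred_Q)⁻¹|_op ≤ C` holds uniformly over all cubes `Q`. -/
theorem stmt18 (d : ℕ) :
    ∃ C : ℝ, 0 < C ∧
      ∀ (n : ℕ) (p q : Euc n → ℝ≥0∞), (∀ x, 1 ≤ p x) →
        (∀ x, (p x)⁻¹ + (q x)⁻¹ = 1) → Measurable p →
      ∀ W : Euc n → Matrix (Fin d) (Fin d) ℂ, (∀ x, (W x).PosDef) →
        (∀ i j, Measurable fun x => W x i j) →
      ∀ Wred Wbar : Euc n → ℝ → Matrix (Fin d) (Fin d) ℂ,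
        IsReducingFamily p W Wred →
        IsReducingFamily q (fun x => (W x)⁻¹) Wbar →
      ∀ RW : ℝ, (∀ (a : Euc n) (ℓ : ℝ), 0 < ℓ → opNorm (Wred a ℓ * Wbar a ℓ) ≤ RW) →
      (∀ (a : Euc n) (ℓ : ℝ), 0 < ℓ → opNorm ((Wbar a ℓ)⁻¹ * (Wred a ℓ)⁻¹) ≤ C) ∧
        ∀ f : Euc n → Fin d → ℂ, Measurable f →
          LocallyIntegrable (fun y => evNorm (f y)) volume →
          ∀ x : Euc n,
            Mdoubleprime W Wbar f x ≤ ENNReal.ofReal C * Mprime W Wred f x ∧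
              Mprime W Wred f x ≤
                ENNReal.ofReal C * ENNReal.ofReal RW * Mdoubleprime W Wbar f x := by
  refine ⟨2, by norm_num, ?_⟩
  intro n p q hp1 hpq hpm W hWpd hWm Wred Wbar hred hbar RW hRW
  have hkey : ∀ (a : Euc n) (ℓ : ℝ), 0 < ℓ → ∀ w : Fin d → ℂ,
      evNorm (((Wbar a ℓ)⁻¹ * (Wred a ℓ)⁻¹).mulVec w) ≤ 2 * evNorm w := by
    intro a ℓ hℓ
    obtain ⟨hrpd, hrall⟩ := hred a ℓ hℓ
    obtain ⟨hbpd, hball⟩ := hbar a ℓ hℓ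
    exact key_matrix hp1 hpq hpm hWpd hWm hℓ (fun u => (hrall u).1) (fun u => (hball u).1)
      hrpd hbpd
  have hRW0 : 0 ≤ RW := le_trans (opNorm_nonneg _) (hRW 0 1 one_pos)
  refine ⟨fun a ℓ hℓ => opNorm_le_of_forall (by norm_num) (hkey a ℓ hℓ), ?_⟩
  intro f hf hloc x
  constructor
  · -- M'' ≤ 2 M'
    refine iSup_le fun a => iSup_le fun ℓ => iSup_le fun hℓ => iSup_le fun hx => ?_
    have hdr : IsUnit (Wred a ℓ).det :=
      (Matrix.isUnit_iff_isUnit_det _).1 (hred a ℓ hℓ).1.isUnit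
    have hpt : ∀ y : Euc n,
        ENNReal.ofReal (evNorm (((Wbar a ℓ)⁻¹).mulVec (((W y)⁻¹).mulVec (f y)))) ≤
        ENNReal.ofReal 2 *
          ENNReal.ofReal (evNorm ((Wred a ℓ).mulVec (((W y)⁻¹).mulVec (f y)))) := by
      intro y
      set z := ((W y)⁻¹).mulVec (f y) with hz
      have hzz : ((Wbar a ℓ)⁻¹ * (Wred a ℓ)⁻¹).mulVec ((Wred a ℓ).mulVec z)
          = ((Wbar a ℓ)⁻¹).mulVec z := by
        rw [← Matrix.mulVec_mulVec, inv_mulVec_cancel hdr]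
      rw [← ENNReal.ofReal_mul (by norm_num)]
      apply ENNReal.ofReal_le_ofReal
      rw [← hzz]
      exact hkey a ℓ hℓ _
    have hterm : (ENNReal.ofReal (ℓ ^ n))⁻¹ *
        ∫⁻ y in cube a ℓ,
          ENNReal.ofReal (evNorm (((Wbar a ℓ)⁻¹).mulVec (((W y)⁻¹).mulVec (f y)))) ≤
        ENNReal.ofReal 2 * ((ENNReal.ofReal (ℓ ^ n))⁻¹ *
          ∫⁻ y in cube a ℓ,
            ENNReal.ofReal (evNorm ((Wred a ℓ).mulVec (((W y)⁻¹).mulVec (f y))))) := by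
      rw [← mul_assoc, mul_comm (ENNReal.ofReal 2) _, mul_assoc,
        ← lintegral_const_mul' _ _ ENNReal.ofReal_ne_top]
      exact mul_le_mul_right (lintegral_mono fun y => hpt y) _
    refine le_trans hterm (mul_le_mul_right ?_ _)
    exact le_iSup_of_le a (le_iSup_of_le ℓ (le_iSup_of_le hℓ (le_iSup_of_le hx le_rfl)))
  · -- M' ≤ 2 RW M''
    refine iSup_le fun a => iSup_le fun ℓ => iSup_le fun hℓ => iSup_le fun hx => ?_
    have hdb : IsUnit (Wbar a ℓ).det :=
      (Matrix.isUnit_iff_isUnit_det _).1 (hbar a ℓ hℓ).1.isUnit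
    have hpt : ∀ y : Euc n,
        ENNReal.ofReal (evNorm ((Wred a ℓ).mulVec (((W y)⁻¹).mulVec (f y)))) ≤
        ENNReal.ofReal RW *
          ENNReal.ofReal (evNorm (((Wbar a ℓ)⁻¹).mulVec (((W y)⁻¹).mulVec (f y)))) := by
      intro y
      set z := ((W y)⁻¹).mulVec (f y) with hz
      have hzz : (Wred a ℓ * Wbar a ℓ).mulVec (((Wbar a ℓ)⁻¹).mulVec z)
          = (Wred a ℓ).mulVec z := by
        rw [← Matrix.mulVec_mulVec, mulVec_inv_cancel hdb]
      rw [← ENNReal.ofReal_mul hRW0]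
      apply ENNReal.ofReal_le_ofReal
      rw [← hzz]
      exact le_trans (mulVec_le_opNorm _ _)
        (mul_le_mul_of_nonneg_right (hRW a ℓ hℓ) (evNorm_nonneg _))
    have hterm : (ENNReal.ofReal (ℓ ^ n))⁻¹ *
        ∫⁻ y in cube a ℓ,
          ENNReal.ofReal (evNorm ((Wred a ℓ).mulVec (((W y)⁻¹).mulVec (f y)))) ≤
        ENNReal.ofReal RW * ((ENNReal.ofReal (ℓ ^ n))⁻¹ *
          ∫⁻ y in cube a ℓ,
            ENNReal.ofReal (evNorm (((Wbar a ℓ)⁻¹).mulVec (((W y)⁻¹).mulVec (f y))))) := by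
      rw [← mul_assoc, mul_comm (ENNReal.ofReal RW) _, mul_assoc,
        ← lintegral_const_mul' _ _ ENNReal.ofReal_ne_top]
      exact mul_le_mul_right (lintegral_mono fun y => hpt y) _
    refine le_trans hterm ?_
    have hM : (ENNReal.ofReal (ℓ ^ n))⁻¹ *
        ∫⁻ y in cube a ℓ,
          ENNReal.ofReal (evNorm (((Wbar a ℓ)⁻¹).mulVec (((W y)⁻¹).mulVec (f y)))) ≤
        Mdoubleprime W Wbar f x :=
      le_iSup_of_le a (le_iSup_of_le ℓ (le_iSup_of_le hℓ (le_iSup_of_le hx le_rfl)))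
    calc ENNReal.ofReal RW * _ ≤ ENNReal.ofReal RW * Mdoubleprime W Wbar f x :=
          mul_le_mul_right hM _
      _ ≤ ENNReal.ofReal 2 * ENNReal.ofReal RW * Mdoubleprime W Wbar f x := by
          rw [mul_assoc]
          exact le_mul_of_one_le_left zero_le (by simp [ENNReal.one_le_ofReal])
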